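/- Let Γ be a finite group, and let G and H be the Latin square graphs of the Cayley tables of the groups Γ × ℤ₄ and Γ × (ℤ₂)², respectively, so that each has n = 16|Γ|² vertices. Then there exists a bijection π : V(G) → V(H) with MMC(π) = √n = 4|Γ|. -/

import Mathlib

open SimpleGraph

section MismatchDefs

variable {V W : Type*}

/-- The mismatch graph `G^π − H`: the symmetric difference of the image of `G` under the
bijection `π` with `H`, as a graph on `V(H)`. Its edges are the positive edges
(edges of `G^π` not in `H`) together with the negative edges (edges of `H` not in `G^π`). -/
def mismatchGraph (G : SimpleGraph V) (H : SimpleGraph W) (π : V ≃ W) : SimpleGraph W :=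
  symmDiff (G.map π.toEmbedding) H

/-- The degree of a vertex in the mismatch graph `G^π − H`. -/
noncomputable def mismatchDeg (G : SimpleGraph V) (H : SimpleGraph W) (π : V ≃ W) (x : W) : ℕ :=
  ((mismatchGraph G H π).neighborSet x).ncard

/-- The number of positive edges of `G^π − H` incident to `x`. -/
noncomputable def posDeg (G : SimpleGraph V) (H : SimpleGraph W) (π : V ≃ W) (x : W) : ℕ :=
  ((G.map π.toEmbedding).neighborSet x \ H.neighborSet x).ncard

/-- The number of negative edges of `G^π − H` incident to `x`. -/
noncomputable def negDeg (G : SimpleGraph V) (H : SimpleGraph W) (π : V ≃ W) (x : W) : ℕ :=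
  (H.neighborSet x \ (G.map π.toEmbedding).neighborSet x).ncard

/-- The maximum mismatch count `MMC(π)`: the maximum degree of the mismatch graph `G^π − H`. -/
noncomputable def MMC [Fintype W] (G : SimpleGraph V) (H : SimpleGraph W) (π : V ≃ W) : ℕ :=
  Finset.univ.sup (mismatchDeg G H π)

/-- The edit mismatch norm `μ_edit(G^π, H)`: the number of edges of the mismatch graph. -/
noncomputable def muEdit (G : SimpleGraph V) (H : SimpleGraph W) (π : V ≃ W) : ℕ :=
  (mismatchGraph G H π).edgeSet.ncard

/-- The edit distance `δ_edit(G, H)`: the minimum of `μ_edit(G^π, H)` over all bijections. -/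
noncomputable def deltaEdit (G : SimpleGraph V) (H : SimpleGraph W) : ℕ :=
  ⨅ π : V ≃ W, muEdit G H π

open Classical in
/-- The signed adjacency matrix of the mismatch graph `G^π − H`:
`+1` on positive edges, `−1` on negative edges, `0` otherwise. -/
noncomputable def signedAdj (G : SimpleGraph V) (H : SimpleGraph W) (π : V ≃ W) :
    Matrix W W ℝ := fun x y =>
  if (G.map π.toEmbedding).Adj x y ∧ ¬ H.Adj x y then 1
  else if H.Adj x y ∧ ¬ (G.map π.toEmbedding).Adj x y then -1 else 0

/-- The `ℓ_p` norm of a vector over a finite index type. -/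
noncomputable def lpNorm [Fintype W] (p : ℝ) (x : W → ℝ) : ℝ :=
  (∑ i, |x i| ^ p) ^ p⁻¹

/-- The `ℓ_p`-operator norm of a matrix: `sup_{x ≠ 0} ‖Mx‖_p / ‖x‖_p`. -/
noncomputable def lpOpNorm [Fintype W] (p : ℝ) (M : Matrix W W ℝ) : ℝ :=
  ⨆ x : {x : W → ℝ // x ≠ 0}, lpNorm p (M.mulVec x.1) / lpNorm p x.1

end MismatchDefs

/-- `L` is a Latin square: each symbol occurs exactly once in each row and each column. -/
def IsLatinSquare {A : Type*} (L : A → A → A) : Prop :=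
  (∀ a, Function.Bijective (L a)) ∧ (∀ b, Function.Bijective fun a => L a b)

/-- The Latin square graph of `L`: its vertices are the cells of the array, and two
distinct cells are adjacent iff they lie in the same row, lie in the same column, or
contain the same symbol. -/
def latinSquareGraph {A : Type*} (L : A → A → A) : SimpleGraph (A × A) :=
  SimpleGraph.fromRel (fun c d => c.1 = d.1 ∨ c.2 = d.2 ∨ L c.1 c.2 = L d.1 d.2)

/-- The Latin square graph of the Cayley table of a group `Δ`: vertices are pairs
`(a, b) ∈ Δ²`, and distinct pairs `(a,b)`, `(c,d)` are adjacent iff `a = c`, `b = d`, or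
`ab = cd`. -/
def cayleyLatinSquareGraph (Δ : Type*) [Group Δ] : SimpleGraph (Δ × Δ) :=
  latinSquareGraph (fun a b : Δ => a * b)

section Aux

def f4 : ZMod 4 → ZMod 2 × ZMod 2 := fun a => ((a.val / 2 : ℕ), (a.val : ℕ))

lemma f4_bij : Function.Bijective f4 := by decide

def MS (a b a' b' : ZMod 4) : Prop :=
  Xor' (a + b = a' + b') (f4 a + f4 b = f4 a' + f4 b')

instance : ∀ a b a' b', Decidable (MS a b a' b') :=
  fun _ _ _ _ => inferInstanceAs (Decidable (Xor _ _))

lemma MS_ne : ∀ a b a' b', MS a b a' b' → a' ≠ a ∧ b' ≠ b := by decide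

def Tset (a b : ZMod 4) : Finset (ZMod 4 × ZMod 4) :=
  Finset.univ.filter (fun p => MS a b p.1 p.2)

lemma T_card_le : ∀ a b : ZMod 4, (Tset a b).card ≤ 4 := by decide

lemma T00 : (Tset 0 0).card = 4 := by decide

noncomputable def φm : Multiplicative (ZMod 4) ≃ Multiplicative (ZMod 2 × ZMod 2) :=
  Multiplicative.toAdd.trans ((Equiv.ofBijective f4 f4_bij).trans Multiplicative.ofAdd)

lemma φm_ofAdd (a : ZMod 4) : φm (Multiplicative.ofAdd a) = Multiplicative.ofAdd (f4 a) := rfl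

noncomputable def bigπ (Γ : Type*) :
    (Γ × Multiplicative (ZMod 4)) × (Γ × Multiplicative (ZMod 4)) ≃
      (Γ × Multiplicative (ZMod 2 × ZMod 2)) × (Γ × Multiplicative (ZMod 2 × ZMod 2)) :=
  ((Equiv.refl Γ).prodCongr φm).prodCongr ((Equiv.refl Γ).prodCongr φm)

lemma cayley_adj {Δ : Type*} [Group Δ] (u v : Δ × Δ) :
    (cayleyLatinSquareGraph Δ).Adj u v ↔
      u ≠ v ∧ (u.1 = v.1 ∨ u.2 = v.2 ∨ u.1 * u.2 = v.1 * v.2) := by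
  rw [cayleyLatinSquareGraph, latinSquareGraph, SimpleGraph.fromRel_adj]
  constructor
  · rintro ⟨h1, h2 | h2⟩ <;> [exact ⟨h1, h2⟩; exact ⟨h1, by tauto⟩]
  · rintro ⟨h1, h2⟩; exact ⟨h1, Or.inl h2⟩

variable {Γ : Type*} [Group Γ]

set_option maxHeartbeats 2000000 in
lemma adj_char (g h g' h' : Γ) (a b a' b' : ZMod 4) :
    (mismatchGraph (cayleyLatinSquareGraph (Γ × Multiplicative (ZMod 4)))
        (cayleyLatinSquareGraph (Γ × Multiplicative (ZMod 2 × ZMod 2))) (bigπ Γ)).Adj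
      (bigπ Γ ((g, .ofAdd a), (h, .ofAdd b))) (bigπ Γ ((g', .ofAdd a'), (h', .ofAdd b')))
      ↔ (g * h = g' * h' ∧ MS a b a' b') := by
  have hmsne := MS_ne a b a' b'
  have hmap : ∀ u v, ((cayleyLatinSquareGraph (Γ × Multiplicative (ZMod 4))).map
      (bigπ Γ).toEmbedding).Adj (bigπ Γ u) (bigπ Γ v) ↔
      (cayleyLatinSquareGraph (Γ × Multiplicative (ZMod 4))).Adj u v := fun u v => by
    rw [show (bigπ Γ) u = (bigπ Γ).toEmbedding u from rfl,
      show (bigπ Γ) v = (bigπ Γ).toEmbedding v from rfl, SimpleGraph.map_adj_apply]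
  rw [mismatchGraph, symmDiff_def]
  simp only [SimpleGraph.sup_adj, SimpleGraph.sdiff_adj, hmap]
  simp only [cayley_adj, bigπ, Equiv.prodCongr_apply, Prod.map, Equiv.refl_apply, φm_ofAdd,
    Prod.mk_mul_mk, ne_eq, Prod.mk.injEq, ← ofAdd_add, Equiv.apply_eq_iff_eq,
    f4_bij.injective.eq_iff, not_and, not_or]
  have hmsne' : (a + b = a' + b' ∧ ¬f4 a + f4 b = f4 a' + f4 b' ∨
      f4 a + f4 b = f4 a' + f4 b' ∧ ¬a + b = a' + b') → ¬(a = a') ∧ ¬(b = b') :=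
    fun hm => ⟨fun e => (hmsne hm).1 e.symm, fun e => (hmsne hm).2 e.symm⟩
  clear hmap hmsne
  unfold MS Xor' Xor
  tauto

lemma deg_eq [Fintype Γ] (g h : Γ) (a b : ZMod 4) :
    mismatchDeg (cayleyLatinSquareGraph (Γ × Multiplicative (ZMod 4)))
      (cayleyLatinSquareGraph (Γ × Multiplicative (ZMod 2 × ZMod 2))) (bigπ Γ)
      (bigπ Γ ((g, .ofAdd a), (h, .ofAdd b))) = (Tset a b).card * Fintype.card Γ := by
  classical
  set G := cayleyLatinSquareGraph (Γ × Multiplicative (ZMod 4))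
  set H := cayleyLatinSquareGraph (Γ × Multiplicative (ZMod 2 × ZMod 2))
  set π := bigπ Γ
  set F : Γ × (ZMod 4 × ZMod 4) → (Γ × Multiplicative (ZMod 4)) × (Γ × Multiplicative (ZMod 4)) :=
    fun p => ((p.1, Multiplicative.ofAdd p.2.1), (p.1⁻¹ * (g * h), Multiplicative.ofAdd p.2.2))
    with hF
  set Nfin : Finset ((Γ × Multiplicative (ZMod 4)) × (Γ × Multiplicative (ZMod 4))) :=
    (Finset.univ ×ˢ Tset a b).image F with hNfin
  have key : ∀ v, (mismatchGraph G H π).Adj (π ((g, .ofAdd a), (h, .ofAdd b))) (π v) ↔ v ∈ Nfin := by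
    rintro ⟨⟨g₁, α⟩, ⟨h₁, β⟩⟩
    rw [← ofAdd_toAdd α, ← ofAdd_toAdd β, adj_char]
    simp only [hNfin, Finset.mem_image, Finset.mem_product, Finset.mem_univ, true_and,
      Tset, Finset.mem_filter, hF]
    constructor
    · rintro ⟨hgh, hms⟩
      refine ⟨(g₁, (Multiplicative.toAdd α, Multiplicative.toAdd β)), hms, ?_⟩
      have hh : g₁⁻¹ * (g * h) = h₁ := by rw [hgh, inv_mul_cancel_left]
      simp [hh]
    · rintro ⟨⟨g₂, a₂, b₂⟩, hm, heq⟩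
      have h1 : g₂ = g₁ := congrArg (fun v => v.1.1) heq
      have h3 : g₂⁻¹ * (g * h) = h₁ := congrArg (fun v => v.2.1) heq
      have ha2 : a₂ = Multiplicative.toAdd α := by
        have := congrArg (fun v => Multiplicative.toAdd v.1.2) heq
        simpa using this
      have hb2 : b₂ = Multiplicative.toAdd β := by
        have := congrArg (fun v => Multiplicative.toAdd v.2.2) heq
        simpa using this
      subst h1 ha2 hb2
      refine ⟨?_, hm⟩
      rw [← h3, mul_inv_cancel_left]
  have himg : (mismatchGraph G H π).neighborSet (π ((g, .ofAdd a), (h, .ofAdd b)))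
      = π '' ↑Nfin := by
    ext y
    simp only [SimpleGraph.mem_neighborSet, Set.mem_image, Finset.mem_coe]
    constructor
    · intro hy
      exact ⟨π.symm y, (key _).mp (by simpa using hy), by simp⟩
    · rintro ⟨v, hv, rfl⟩
      exact (key v).mpr hv
  have hFinj : Function.Injective F := by
    rintro ⟨p1, p2, p3⟩ ⟨q1, q2, q3⟩ hpq
    simp only [hF, Prod.mk.injEq] at hpq
    obtain ⟨⟨e1, e2⟩, _, e4⟩ := hpq
    have e2' : p2 = q2 := by simpa using e2
    have e4' : p3 = q3 := by simpa using e4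
    simp [e1, e2', e4']
  rw [mismatchDeg, himg, Set.ncard_image_of_injective _ π.injective, Set.ncard_coe_finset,
    hNfin, Finset.card_image_of_injective _ hFinj, Finset.card_product, Finset.card_univ,
    mul_comm]

end Aux

/-- Let `Γ` be a finite group, and let `G`, `H` be the Latin square
graphs of the Cayley tables of `Γ × ℤ₄` and `Γ × (ℤ₂)²` (each on `n = 16|Γ|²` vertices).
Then there is a bijection `π : V(G) → V(H)` with `MMC(π) = √n = 4|Γ|`. -/
theorem statement_18 {Γ : Type*} [Group Γ] [Fintype Γ] :
    ∃ π : (Γ × Multiplicative (ZMod 4)) × (Γ × Multiplicative (ZMod 4)) ≃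
        (Γ × Multiplicative (ZMod 2 × ZMod 2)) × (Γ × Multiplicative (ZMod 2 × ZMod 2)),
      MMC (cayleyLatinSquareGraph (Γ × Multiplicative (ZMod 4)))
          (cayleyLatinSquareGraph (Γ × Multiplicative (ZMod 2 × ZMod 2))) π
        = 4 * Fintype.card Γ := by
  classical
  refine ⟨bigπ Γ, le_antisymm (Finset.sup_le ?_) ?_⟩
  · intro x _
    rw [show x = bigπ Γ ((bigπ Γ).symm x) from ((bigπ Γ).apply_symm_apply x).symm]
    obtain ⟨⟨g, α⟩, ⟨h, β⟩⟩ := (bigπ Γ).symm x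
    rw [← ofAdd_toAdd α, ← ofAdd_toAdd β, deg_eq]
    exact Nat.mul_le_mul_right _ (T_card_le _ _)
  · have hle := Finset.le_sup (f := mismatchDeg (cayleyLatinSquareGraph (Γ × Multiplicative (ZMod 4)))
      (cayleyLatinSquareGraph (Γ × Multiplicative (ZMod 2 × ZMod 2))) (bigπ Γ))
      (Finset.mem_univ (bigπ Γ ((1, Multiplicative.ofAdd 0), (1, Multiplicative.ofAdd 0))))
    rwa [deg_eq, T00] at hle
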